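/- If B is a bramble of a graph G of order r (i.e., every hitting set of B has size at least r), then every tree decomposition of G has width at least r − 1; consequently the maximum bramble order is at most tw(G) + 1. -/

import Mathlib

open SimpleGraph

/-- `B : T → Set V` together with a tree `Tr` forms a tree decomposition of `G`. -/
def IsTreeDecomp {V T : Type} (G : SimpleGraph V) (Tr : SimpleGraph T) (B : T → Set V) : Prop :=
  Tr.Connected ∧ Tr.IsAcyclic ∧
  (∀ v : V, ∃ t : T, v ∈ B t) ∧
  (∀ u v : V, G.Adj u v → ∃ t : T, u ∈ B t ∧ v ∈ B t) ∧
  (∀ v : V, (Tr.induce {t : T | v ∈ B t}).Connected)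

/-- `G` has a tree decomposition of width at most `w` (all bags of size at most `w + 1`). -/
def TreewidthLE {V : Type} (G : SimpleGraph V) (w : ℕ) : Prop :=
  ∃ (T : Type) (Tr : SimpleGraph T) (B : T → Finset V),
    IsTreeDecomp G Tr (fun t => (B t : Set V)) ∧ ∀ t : T, (B t).card ≤ w + 1

/-- The tree-width of `G`: the least width of a tree decomposition of `G`. -/
noncomputable def treewidth {V : Type} (G : SimpleGraph V) : ℕ :=
  sInf {w : ℕ | TreewidthLE G w}

/-- `B` is a bramble of `G`: a family of nonempty connected vertex subsets any two of
which touch (intersect or are joined by an edge). -/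
def IsBramble {V : Type} (G : SimpleGraph V) (B : Set (Set V)) : Prop :=
  (∀ S ∈ B, S.Nonempty ∧ (G.induce S).Connected) ∧
  (∀ S ∈ B, ∀ T ∈ B, (S ∩ T).Nonempty ∨ ∃ a ∈ S, ∃ b ∈ T, G.Adj a b)

namespace BrambleAux

variable {T : Type} {Tr : SimpleGraph T}

/-- There is a walk from `a` to `b` all of whose vertices lie in `X`. -/
def WalkIn (Tr : SimpleGraph T) (X : Set T) (a b : T) : Prop :=
  ∃ w : Tr.Walk a b, ∀ x ∈ w.support, x ∈ X

lemma WalkIn.mono {X Y : Set T} (hXY : X ⊆ Y) {a b : T} (h : WalkIn Tr X a b) :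
    WalkIn Tr Y a b := by
  obtain ⟨w, hw⟩ := h
  exact ⟨w, fun x hx => hXY (hw x hx)⟩

lemma WalkIn.trans {X : Set T} {a b c : T} (h1 : WalkIn Tr X a b) (h2 : WalkIn Tr X b c) :
    WalkIn Tr X a c := by
  obtain ⟨w1, hw1⟩ := h1
  obtain ⟨w2, hw2⟩ := h2
  refine ⟨w1.append w2, fun x hx => ?_⟩
  rw [SimpleGraph.Walk.mem_support_append_iff] at hx
  exact hx.elim (hw1 x) (hw2 x)

lemma walkIn_of_induce_connected {X : Set T} (h : (Tr.induce X).Connected)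
    {a b : T} (ha : a ∈ X) (hb : b ∈ X) : WalkIn Tr X a b := by
  obtain ⟨w⟩ := h.preconnected ⟨a, ha⟩ ⟨b, hb⟩
  refine ⟨w.map (SimpleGraph.Embedding.induce X).toHom, fun x hx => ?_⟩
  erw [SimpleGraph.Walk.support_map, List.mem_map] at hx
  obtain ⟨y, _, rfl⟩ := hx
  exact y.2

/-- The side of the tree edge `{a,b}` containing `b`. -/
def Side (Tr : SimpleGraph T) (a b : T) : Set T :=
  {x | (Tr.deleteEdges {s(a, b)}).Reachable b x}

lemma mem_side_self (a b : T) : b ∈ Side Tr a b := SimpleGraph.Reachable.refl b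

lemma not_mem_side_self (hac : Tr.IsAcyclic) {a b : T} (hab : Tr.Adj a b) :
    a ∉ Side Tr a b := by
  have hbr := (SimpleGraph.isAcyclic_iff_forall_adj_isBridge.mp hac) hab
  rw [SimpleGraph.isBridge_iff] at hbr
  intro h
  exact hbr h.symm

lemma side_disjoint (hac : Tr.IsAcyclic) {a b x : T} (hab : Tr.Adj a b)
    (h1 : x ∈ Side Tr a b) (h2 : x ∈ Side Tr b a) : False := by
  have hbr := (SimpleGraph.isAcyclic_iff_forall_adj_isBridge.mp hac) hab
  rw [SimpleGraph.isBridge_iff] at hbr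
  have h2' : (Tr.deleteEdges {s(a, b)}).Reachable a x := by
    simp only [Side, Set.mem_setOf_eq] at h2
    rwa [Sym2.eq_swap] at h2
  exact hbr (h2'.trans h1.symm)

lemma adj_side_step {a b u v : T} (huv : Tr.Adj u v)
    (h : u ∈ Side Tr a b ∨ u ∈ Side Tr b a) :
    v ∈ Side Tr a b ∨ v ∈ Side Tr b a := by
  by_cases he : s(u, v) = s(a, b)
  · rw [Sym2.eq_iff] at he
    rcases he with ⟨h1, h2⟩ | ⟨h1, h2⟩
    · subst h1; subst h2; exact Or.inl (mem_side_self _ _)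
    · subst h1; subst h2; exact Or.inr (mem_side_self _ _)
  · have hadj : (Tr.deleteEdges {s(a, b)}).Adj u v := by
      rw [SimpleGraph.deleteEdges_adj]
      exact ⟨huv, by simpa using he⟩
    have hadj' : (Tr.deleteEdges {s(b, a)}).Adj u v := by
      rw [SimpleGraph.deleteEdges_adj]
      refine ⟨huv, ?_⟩
      simp only [Set.mem_singleton_iff]
      rw [show s(b, a) = s(a, b) from Sym2.eq_swap]
      exact he
    rcases h with h | h
    · exact Or.inl (h.trans hadj.reachable)
    · exact Or.inr (h.trans hadj'.reachable)

lemma side_or_of_walk {a b : T} {x y : T} (w : Tr.Walk x y)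
    (hx : x ∈ Side Tr a b ∨ x ∈ Side Tr b a) :
    y ∈ Side Tr a b ∨ y ∈ Side Tr b a := by
  induction w with
  | nil => exact hx
  | cons huv w ih => exact ih (adj_side_step huv hx)

lemma mem_side_or (hc : Tr.Connected) {a b : T} (hab : Tr.Adj a b) (x : T) :
    x ∈ Side Tr a b ∨ x ∈ Side Tr b a := by
  obtain ⟨w⟩ := hc.preconnected b x
  exact side_or_of_walk w (Or.inl (mem_side_self a b))

lemma side_of_walk_avoid {a b x y : T} (hx : x ∈ Side Tr a b) (w : Tr.Walk x y)
    (hav : ∀ z ∈ w.support, z ≠ a) : y ∈ Side Tr a b := by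
  have hedges : ∀ e ∈ w.edges, e ∉ ({s(a, b)} : Set (Sym2 T)) := by
    intro e he hmem
    rw [Set.mem_singleton_iff] at hmem
    subst hmem
    exact hav a (w.fst_mem_support_of_mem_edges he) rfl
  exact hx.trans ⟨w.toDeleteEdges _ hedges⟩

lemma exists_first_step {U : Set T} {t u : T} (hU : WalkIn Tr U t u) (hne : t ≠ u) :
    ∃ t', Tr.Adj t t' ∧ t' ∈ U ∧ u ∈ Side Tr t t' := by
  classical
  obtain ⟨w0, hw0⟩ := hU
  have hsupp : ∀ x ∈ (w0.toPath : Tr.Walk t u).support, x ∈ U :=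
    fun x hx => hw0 x (w0.support_toPath_subset hx)
  have hnil : ¬ (w0.toPath : Tr.Walk t u).Nil := SimpleGraph.Walk.not_nil_of_ne hne
  have hpath : (w0.toPath : Tr.Walk t u).IsPath := w0.toPath.2
  obtain ⟨t', hadj, q, hq⟩ := SimpleGraph.Walk.not_nil_iff.mp hnil
  rw [hq] at hpath hsupp
  rw [SimpleGraph.Walk.cons_isPath_iff] at hpath
  refine ⟨t', hadj, hsupp t' (by simp), ?_⟩
  refine side_of_walk_avoid (mem_side_self t t') q (fun z hz hza => ?_)
  exact hpath.2 (hza ▸ hz)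

lemma side_step_subset (hac : Tr.IsAcyclic) {t t' t'' : T}
    (h1 : Tr.Adj t t') (h2 : Tr.Adj t' t'') (hne : t'' ≠ t) :
    Side Tr t' t'' ⊆ Side Tr t t' := by
  classical
  intro x hx
  obtain ⟨w⟩ := (hx : (Tr.deleteEdges {s(t', t'')}).Reachable t'' x)
  have hedge1 : (Tr.deleteEdges {s(t'', t')}).Adj t' t := by
    rw [SimpleGraph.deleteEdges_adj]
    refine ⟨h1.symm, ?_⟩
    intro hmem
    rw [Set.mem_singleton_iff, Sym2.eq_iff] at hmem
    rcases hmem with ⟨ha, hb⟩ | ⟨ha, hb⟩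
    · exact h2.ne ha
    · exact hne hb.symm
  have htmem : t ∈ Side Tr t'' t' := hedge1.reachable
  have htnot : t ∉ Side Tr t' t'' := fun h => side_disjoint hac h2 h htmem
  have havoid : ∀ z ∈ w.support, z ≠ t := by
    intro z hz hzt
    subst hzt
    exact htnot ⟨w.takeUntil z hz⟩
  have hedge2 : (Tr.deleteEdges {s(t, t')}).Adj t' t'' := by
    rw [SimpleGraph.deleteEdges_adj]
    refine ⟨h2, ?_⟩
    intro hmem
    rw [Set.mem_singleton_iff, Sym2.eq_iff] at hmem
    rcases hmem with ⟨ha, hb⟩ | ⟨ha, hb⟩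
    · exact h1.ne ha.symm
    · exact hne hb
  have ht'' : t'' ∈ Side Tr t t' := (mem_side_self t t').trans hedge2.reachable
  have hw' : ∀ e ∈ w.edges, e ∈ Tr.edgeSet := by
    intro e he
    exact (SimpleGraph.edgeSet_mono (SimpleGraph.deleteEdges_le _)) (w.edges_subset_edgeSet he)
  have := side_of_walk_avoid (Tr := Tr) ht'' (w.transfer Tr hw') ?_
  · exact this
  · rw [SimpleGraph.Walk.support_transfer]
    exact havoid


lemma WalkIn.symm {X : Set T} {a b : T} (h : WalkIn Tr X a b) : WalkIn Tr X b a := by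
  obtain ⟨w, hw⟩ := h
  refine ⟨w.reverse, fun x hx => hw x ?_⟩
  rwa [SimpleGraph.Walk.support_reverse, List.mem_reverse] at hx

lemma trace_walkIn {V : Type} {G : SimpleGraph V} {Tr : SimpleGraph T} {bag : T → Set V}
    (hedge : ∀ u v : V, G.Adj u v → ∃ t : T, u ∈ bag t ∧ v ∈ bag t)
    (hcoh : ∀ v : V, (Tr.induce {t : T | v ∈ bag t}).Connected)
    {S : Set V} (hconn : (G.induce S).Connected) :
    ∀ s₁ ∈ {t | (S ∩ bag t).Nonempty}, ∀ s₂ ∈ {t | (S ∩ bag t).Nonempty},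
      WalkIn Tr {t | (S ∩ bag t).Nonempty} s₁ s₂ := by
  have key : ∀ (x y : ↥S) (_ : (G.induce S).Walk x y) (s₁ s₂ : T),
      (x : V) ∈ bag s₁ → (y : V) ∈ bag s₂ → WalkIn Tr {t | (S ∩ bag t).Nonempty} s₁ s₂ := by
    intro x y p
    induction p with
    | @nil xx =>
      intro s₁ s₂ h1 h2
      have := walkIn_of_induce_connected (Tr := Tr) (hcoh (xx : V)) h1 h2
      refine this.mono (fun t ht => ?_)
      exact ⟨(xx : V), xx.2, ht⟩
    | @cons a cc yy hadj q ih =>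
      intro s₁ s₂ h1 h2
      have hG : G.Adj (a : V) (cc : V) := hadj
      obtain ⟨t, hat, hct⟩ := hedge _ _ hG
      have w1 := (walkIn_of_induce_connected (Tr := Tr) (hcoh (a : V)) h1 hat).mono
        (fun u hu => (⟨_, Subtype.coe_prop a, hu⟩ : (S ∩ bag u).Nonempty))
      exact w1.trans (ih t s₂ hct h2)
  rintro s₁ ⟨v₁, hv₁S, hv₁⟩ s₂ ⟨v₂, hv₂S, hv₂⟩
  obtain ⟨p⟩ := hconn.preconnected ⟨v₁, hv₁S⟩ ⟨v₂, hv₂S⟩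
  exact key _ _ p s₁ s₂ hv₁ hv₂

lemma exists_cover {V T : Type} [Fintype V] {G : SimpleGraph V} {Tr : SimpleGraph T}
    {bag : T → Set V} (htd : IsTreeDecomp G Tr bag) {B : Set (Set V)} (hB : IsBramble G B) :
    ∃ t : T, ∀ S ∈ B, (S ∩ bag t).Nonempty := by
  classical
  obtain ⟨hc, hac, hall, hedge, hcoh⟩ := htd
  by_contra hcon
  push_neg at hcon
  haveI : Nonempty T := hc.nonempty
  have hcent : ∀ S : Set V, ∃ t : T, S ∈ B → (S ∩ bag t).Nonempty := by
    intro S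
    by_cases hS : S ∈ B
    · obtain ⟨v, hv⟩ := (hB.1 S hS).1
      obtain ⟨t, ht⟩ := hall v
      exact ⟨t, fun _ => ⟨v, hv, ht⟩⟩
    · exact ⟨Classical.arbitrary T, fun h => absurd h hS⟩
  choose c hcmem using hcent
  choose Sv hSvB hSv using hcon
  set t₀ : T := c (Sv (Classical.arbitrary T)) with ht₀
  have hwalks : ∀ S : Set V, ∃ _ : Tr.Walk t₀ (c S), True :=
    fun S => ⟨(hc.preconnected t₀ (c S)).some, trivial⟩
  choose w _ using hwalks
  set U : Set T := ⋃ S ∈ B, {x | x ∈ (w S).support} with hU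
  have hUfin : U.Finite :=
    Set.Finite.biUnion (Set.toFinite B) (fun S _ => (w S).support.finite_toSet)
  have hmemU : ∀ S ∈ B, ∀ x ∈ (w S).support, x ∈ U := by
    intro S hS x hx
    exact Set.mem_biUnion hS hx
  have hcU : ∀ S ∈ B, c S ∈ U := fun S hS => hmemU S hS _ (SimpleGraph.Walk.end_mem_support _)
  have ht₀U : t₀ ∈ U :=
    hmemU _ (hSvB (Classical.arbitrary T)) _ (SimpleGraph.Walk.start_mem_support _)
  have hUconn : ∀ x ∈ U, WalkIn Tr U x t₀ := by
    intro x hx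
    rw [hU, Set.mem_iUnion₂] at hx
    obtain ⟨S, hSB, hxs⟩ := hx
    refine ⟨((w S).takeUntil x hxs).reverse, fun z hz => ?_⟩
    rw [SimpleGraph.Walk.support_reverse, List.mem_reverse] at hz
    exact hmemU S hSB z (SimpleGraph.Walk.support_takeUntil_subset _ hxs hz)
  have pointer : ∀ t ∈ U, ∃ t', Tr.Adj t t' ∧ t' ∈ U ∧
      ∃ S ∈ B, ¬(S ∩ bag t).Nonempty ∧ {u | (S ∩ bag u).Nonempty} ⊆ Side Tr t t' := by
    intro t htU
    have hSB := hSvB t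
    have hdis : ¬(Sv t ∩ bag t).Nonempty := by
      rw [hSv t]; exact Set.not_nonempty_empty
    have hcS : (Sv t ∩ bag (c (Sv t))).Nonempty := hcmem _ hSB
    have hne : t ≠ c (Sv t) := by
      intro heq
      rw [← heq] at hcS
      exact hdis hcS
    have hwalk : WalkIn Tr U t (c (Sv t)) :=
      (hUconn t htU).trans (hUconn _ (hcU _ hSB)).symm
    obtain ⟨t', hadj, ht'U, hside⟩ := exists_first_step hwalk hne
    refine ⟨t', hadj, ht'U, Sv t, hSB, hdis, ?_⟩
    intro y hy
    obtain ⟨wy, hwy⟩ := trace_walkIn hedge hcoh (hB.1 _ hSB).2 _ hcS y hy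
    refine side_of_walk_avoid hside wy (fun z hz hzt => ?_)
    exact hdis (hzt ▸ hwy z hz)
  have conflict : ∀ {t t' : T}, Tr.Adj t t' →
      (∃ S ∈ B, ¬(S ∩ bag t).Nonempty ∧ {u | (S ∩ bag u).Nonempty} ⊆ Side Tr t t') →
      (∃ S' ∈ B, ¬(S' ∩ bag t').Nonempty ∧ {u | (S' ∩ bag u).Nonempty} ⊆ Side Tr t' t) → False := by
    rintro t t' hadj ⟨S, hSB, _, hS⟩ ⟨S', hS'B, _, hS'⟩
    rcases hB.2 S hSB S' hS'B with ⟨v, hvS, hvS'⟩ | ⟨a, haS, b, hbS', hab⟩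
    · obtain ⟨s, hs⟩ := hall v
      exact side_disjoint hac hadj (hS ⟨v, hvS, hs⟩) (hS' ⟨v, hvS', hs⟩)
    · obtain ⟨s, hsa, hsb⟩ := hedge a b hab
      exact side_disjoint hac hadj (hS ⟨a, haS, hsa⟩) (hS' ⟨b, hbS', hsb⟩)
  have main : ∀ (n : ℕ) (t t' : T), t' ∈ U → Tr.Adj t t' →
      (∃ S ∈ B, ¬(S ∩ bag t).Nonempty ∧ {u | (S ∩ bag u).Nonempty} ⊆ Side Tr t t') →
      (Side Tr t t' ∩ U).ncard = n → False := by
    intro n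
    induction n using Nat.strong_induction_on with
    | _ n ih =>
      intro t t' ht'U hadj hP hn
      obtain ⟨t'', hadj', ht''U, hP'⟩ := pointer t' ht'U
      by_cases hne : t'' = t
      · subst hne
        exact conflict hadj hP hP'
      · have hsub := side_step_subset hac hadj hadj' hne
        have hss : Side Tr t' t'' ∩ U ⊂ Side Tr t t' ∩ U := by
          refine ⟨Set.inter_subset_inter_left U hsub, fun hsup => ?_⟩
          exact not_mem_side_self hac hadj'
            (hsup ⟨mem_side_self t t', ht'U⟩).1
        have hlt : (Side Tr t' t'' ∩ U).ncard < n := by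
          rw [← hn]
          exact Set.ncard_lt_ncard hss (hUfin.inter_of_right _)
        exact ih _ hlt t' t'' ht''U hadj' hP' rfl
  obtain ⟨t₁, hadj₁, ht₁U, hP₁⟩ := pointer t₀ ht₀U
  exact main _ t₀ t₁ ht₁U hadj₁ hP₁ rfl

end BrambleAux

lemma trivial_treewidthLE {V : Type} [Fintype V] (G : SimpleGraph V) :
    TreewidthLE G (Fintype.card V) := by
  classical
  have hconn : ∀ (X : Set PUnit), X.Nonempty → ((⊥ : SimpleGraph PUnit).induce X).Connected := by
    intro X hX
    rw [connected_iff]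
    refine ⟨fun a b => ?_, ⟨⟨hX.choose, hX.choose_spec⟩⟩⟩
    rw [Subsingleton.elim a b]
  refine ⟨PUnit, ⊥, fun _ => Finset.univ, ⟨?_, isAcyclic_bot, fun v => ⟨PUnit.unit, by simp⟩,
    fun u v _ => ⟨PUnit.unit, by simp⟩, fun v => ?_⟩, fun t => by simp⟩
  · have := hconn Set.univ ⟨PUnit.unit, trivial⟩
    rw [connected_iff]
    refine ⟨fun a b => by rw [Subsingleton.elim a b], ⟨PUnit.unit⟩⟩
  · exact hconn _ ⟨PUnit.unit, by simp⟩

/-- If `B` is a bramble of order at least `r` (every hitting set has size at least `r`),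
then every tree decomposition of `G` has width at least `r - 1`; consequently
`r ≤ tw(G) + 1`. -/
theorem stmt6 {V : Type} [Fintype V] (G : SimpleGraph V) (B : Set (Set V)) (r : ℕ)
    (hB : IsBramble G B)
    (hord : ∀ H : Finset V, (∀ S ∈ B, ∃ x ∈ H, x ∈ S) → r ≤ H.card) :
    (∀ w : ℕ, TreewidthLE G w → r ≤ w + 1) ∧ r ≤ treewidth G + 1 := by
  have part1 : ∀ w : ℕ, TreewidthLE G w → r ≤ w + 1 := by
    rintro w ⟨T, Tr, bags, htd, hcard⟩
    obtain ⟨t, ht⟩ := BrambleAux.exists_cover htd hB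
    refine le_trans (hord (bags t) ?_) (hcard t)
    intro S hS
    obtain ⟨x, hxS, hxbag⟩ := ht S hS
    exact ⟨x, by simpa using hxbag, hxS⟩
  refine ⟨part1, ?_⟩
  have hne : {w : ℕ | TreewidthLE G w}.Nonempty := ⟨_, trivial_treewidthLE G⟩
  exact part1 _ (Nat.sInf_mem hne)
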